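/- arXiv:1401.7171 — 2 statements merged into one kernel-verified Lean document; each statement's English description precedes it below -/
import Mathlib

section
/- Decomposition theorem: every property P equals the intersection of a safety property and a liveness property; concretely, P = cls(P) ∩ (P ∪ cls(P)ᶜ), where cls(P) is safe and P ∪ cls(P)ᶜ is live. -/
def cls {f ω : Type*} (pre : f → ω → Prop) (P : Set ω) : Set ω :=
  {T | ∀ t, pre t T → ∃ T' ∈ P, pre t T'}

theorem decomposition {f ω : Type*} (pre : f → ω → Prop) (le : f → f → Prop)
    (hfin : ∀ T : ω, ∃ t : f, pre t T)
    (hext : ∀ t : f, ∃ T : ω, pre t T)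
    (hdown : ∀ t t' : f, ∀ T : ω, le t t' → pre t' T → pre t T)
    (hdir : ∀ t₁ t₂ : f, ∀ T : ω, pre t₁ T → pre t₂ T →
      ∃ t₃, pre t₃ T ∧ le t₁ t₃ ∧ le t₂ t₃)
    (P : Set ω) :
    P = cls pre P ∩ (P ∪ (cls pre P)ᶜ) ∧
    cls pre (cls pre P) = cls pre P ∧
    cls pre (P ∪ (cls pre P)ᶜ) = Set.univ := by
  have hsub : P ⊆ cls pre P := fun T hT t ht => ⟨T, hT, ht⟩
  refine ⟨?_, ?_, ?_⟩
  · ext T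
    constructor
    · exact fun hT => ⟨hsub hT, Or.inl hT⟩
    · rintro ⟨hc, hT | hT⟩
      · exact hT
      · exact absurd hc hT
  · ext T
    constructor
    · intro hT t ht
      obtain ⟨T', hT', ht'⟩ := hT t ht
      obtain ⟨T'', hT'', ht''⟩ := hT' t ht'
      exact ⟨T'', hT'', ht''⟩
    · exact fun hT t ht => ⟨T, hT, ht⟩
  · ext T
    simp only [Set.mem_univ, iff_true]
    intro t ht
    obtain ⟨T', hT'⟩ := hext t
    by_cases h : T' ∈ cls pre P
    · obtain ⟨T'', hT'', ht''⟩ := h t hT'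
      exact ⟨T'', Or.inl hT'', ht''⟩
    · exact ⟨T', Or.inr h, hT'⟩
end

section
/- Safety properties are closed under binary union: if P₁ and P₂ are safety properties then P₁ ∪ P₂ is a safety property, under the directedness assumption on finite prefixes. -/
theorem safety_union {f ω : Type*} (pre : f → ω → Prop) (le : f → f → Prop)
    (hdown : ∀ t t' : f, ∀ T : ω, le t t' → pre t' T → pre t T)
    (hdir : ∀ t₁ t₂ : f, ∀ T : ω, pre t₁ T → pre t₂ T →
      ∃ t₃, pre t₃ T ∧ le t₁ t₃ ∧ le t₂ t₃)
    (P₁ P₂ : Set ω)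
    (h₁ : P₁ = cls pre P₁) (h₂ : P₂ = cls pre P₂) :
    P₁ ∪ P₂ = cls pre (P₁ ∪ P₂) := by
  ext T
  constructor
  · rintro (hT | hT) t ht
    · exact ⟨T, Or.inl hT, ht⟩
    · exact ⟨T, Or.inr hT, ht⟩
  · intro hT
    by_contra hc
    have hc1 : T ∉ P₁ := fun h => hc (Or.inl h)
    have hc2 : T ∉ P₂ := fun h => hc (Or.inr h)
    have n1 : T ∉ cls pre P₁ := h₁ ▸ hc1
    have n2 : T ∉ cls pre P₂ := h₂ ▸ hc2
    simp only [cls, Set.mem_setOf_eq, not_forall] at n1 n2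
    obtain ⟨t₁, ht₁, hn1⟩ := n1
    obtain ⟨t₂, ht₂, hn2⟩ := n2
    push_neg at hn1 hn2
    obtain ⟨t₃, ht₃, hle1, hle2⟩ := hdir t₁ t₂ T ht₁ ht₂
    obtain ⟨T', hT', hpre⟩ := hT t₃ ht₃
    rcases hT' with h | h
    · exact hn1 T' h (hdown t₁ t₃ T' hle1 hpre)
    · exact hn2 T' h (hdown t₂ t₃ T' hle2 hpre)
end
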